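/- Let η : ℝ → ℝ satisfy η'' = −(Scal/2)·η with Scal < 0 constant, η(0) = 1, η'(0) = k with |k| > √(−Scal/2). Then η has a zero. -/

import Mathlib

theorem stmt13 (η η' : ℝ → ℝ) (Scal k : ℝ) (hScal : Scal < 0)
    (hη : ∀ u, HasDerivAt η (η' u) u)
    (hη' : ∀ u, HasDerivAt η' (-(Scal / 2) * η u) u)
    (h0 : η 0 = 1) (h0' : η' 0 = k)
    (hk : Real.sqrt (-Scal / 2) < |k|) :
    ∃ u : ℝ, η u = 0 := by
  by_contra hcon
  push_neg at hcon
  set μsq : ℝ := -(Scal / 2) with hμdef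
  have hμ : 0 < μsq := by simp [hμdef]; linarith
  set E : ℝ := k ^ 2 - μsq with hEdef
  have hE : 0 < E := by
    have h1 : Real.sqrt μsq < |k| := by rwa [neg_div] at hk
    have h2 : μsq < k ^ 2 := by
      have := pow_lt_pow_left₀ h1 (Real.sqrt_nonneg _) (by norm_num : 2 ≠ 0)
      rwa [Real.sq_sqrt hμ.le, sq_abs] at this
    linarith
  -- continuity
  have hηc : Continuous η := by
    rw [continuous_iff_continuousAt]; exact fun u => (hη u).continuousAt
  have hη'c : Continuous η' := by
    rw [continuous_iff_continuousAt]; exact fun u => (hη' u).continuousAt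
  -- energy is constant
  have hF : ∀ u : ℝ, η' u ^ 2 - μsq * η u ^ 2 = E := by
    intro u
    have hd : ∀ x : ℝ, HasDerivAt (fun y => η' y ^ 2 - μsq * η y ^ 2) 0 x := by
      intro x
      have h1 : HasDerivAt (fun y => η' y ^ 2)
          ((2 : ℕ) * η' x ^ 1 * (μsq * η x)) x := (hη' x).pow 2
      have h2 : HasDerivAt (fun y => μsq * η y ^ 2)
          (μsq * ((2 : ℕ) * η x ^ 1 * η' x)) x := ((hη x).pow 2).const_mul μsq
      have : HasDerivAt (fun y => η' y ^ 2 - μsq * η y ^ 2) _ x := h1.sub h2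
      convert this using 1
      ring
    have hconst : ∀ x y : ℝ, (fun y => η' y ^ 2 - μsq * η y ^ 2) x
        = (fun y => η' y ^ 2 - μsq * η y ^ 2) y := by
      intro x y
      exact is_const_of_deriv_eq_zero (fun z => (hd z).differentiableAt)
        (fun z => (hd z).deriv) x y
    have := hconst u 0
    simp only [h0, h0'] at this
    rw [hEdef]; rw [this]; ring
  have hη'sq : ∀ u : ℝ, E ≤ η' u ^ 2 := by
    intro u
    have := hF u
    nlinarith [sq_nonneg (η u)]
  have hη'ne : ∀ u : ℝ, η' u ≠ 0 := by
    intro u h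
    have := hη'sq u
    rw [h] at this
    nlinarith
  -- η is everywhere positive
  have hpos : ∀ u : ℝ, 0 < η u := by
    intro u
    rcases lt_trichotomy (η u) 0 with h | h | h
    · exfalso
      have hsub : Set.uIcc (η u) (η 0) ⊆ η '' Set.uIcc u 0 :=
        intermediate_value_uIcc hηc.continuousOn
      have h0m : (0 : ℝ) ∈ Set.uIcc (η u) (η 0) := by
        rw [h0]; exact Set.mem_uIcc.2 (Or.inl ⟨h.le, by norm_num⟩)
      obtain ⟨c, _, hc⟩ := hsub h0m
      exact hcon c hc
    · exact absurd h (hcon u)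
    · exact h
  -- η' has constant sign equal to sign of k
  have hksq : 0 < k ^ 2 := by nlinarith
  have hkne : k ≠ 0 := by intro h; rw [h] at hksq; simp at hksq
  have hsE : 0 < Real.sqrt E := Real.sqrt_pos.2 hE
  have habs : ∀ u : ℝ, Real.sqrt E ≤ |η' u| := by
    intro u
    have := Real.sqrt_le_sqrt (hη'sq u)
    rwa [Real.sqrt_sq_eq_abs] at this
  rcases hkne.lt_or_gt with hklt | hkgt
  · -- k < 0 : η' always negative, η decreases to -∞
    have hneg : ∀ u : ℝ, η' u < 0 := by
      intro u
      rcases (hη'ne u).lt_or_gt with h | h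
      · exact h
      · exfalso
        have hsub : Set.uIcc (η' u) (η' 0) ⊆ η' '' Set.uIcc u 0 :=
          intermediate_value_uIcc hη'c.continuousOn
        have h0m : (0 : ℝ) ∈ Set.uIcc (η' u) (η' 0) := by
          rw [h0']; exact Set.mem_uIcc.2 (Or.inr ⟨hklt.le, h.le⟩)
        obtain ⟨c, _, hc⟩ := hsub h0m
        exact hη'ne c hc
    have hbound : ∀ u : ℝ, η' u ≤ -Real.sqrt E := by
      intro u
      have := habs u
      rw [abs_of_neg (hneg u)] at this
      linarith
    set b : ℝ := 2 / Real.sqrt E with hbdef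
    have hb : 0 < b := by positivity
    obtain ⟨c, _, hc⟩ := exists_hasDerivAt_eq_slope η η' hb
      hηc.continuousOn (fun x _ => hη x)
    have hηb : η b = η 0 + η' c * b := by
      rw [sub_zero, eq_div_iff hb.ne'] at hc
      linarith [hc]
    have : Real.sqrt E * b = 2 := by
      rw [hbdef]; field_simp
    have := hpos b
    nlinarith [hbound c, hpos b]
  · -- k > 0 : η' always positive, η decreases to -∞ backwards
    have hposd : ∀ u : ℝ, 0 < η' u := by
      intro u
      rcases (hη'ne u).lt_or_gt with h | h
      · exfalso
        have hsub : Set.uIcc (η' u) (η' 0) ⊆ η' '' Set.uIcc u 0 :=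
          intermediate_value_uIcc hη'c.continuousOn
        have h0m : (0 : ℝ) ∈ Set.uIcc (η' u) (η' 0) := by
          rw [h0']; exact Set.mem_uIcc.2 (Or.inl ⟨h.le, hkgt.le⟩)
        obtain ⟨c, _, hc⟩ := hsub h0m
        exact hη'ne c hc
      · exact h
    have hbound : ∀ u : ℝ, Real.sqrt E ≤ η' u := by
      intro u
      have := habs u
      rwa [abs_of_pos (hposd u)] at this
    set a : ℝ := -(2 / Real.sqrt E) with hadef
    have ha : a < 0 := by
      have : 0 < 2 / Real.sqrt E := by positivity
      rw [hadef]; linarith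
    obtain ⟨c, _, hc⟩ := exists_hasDerivAt_eq_slope η η' ha
      hηc.continuousOn (fun x _ => hη x)
    have hne : (0 : ℝ) - a ≠ 0 := by linarith
    rw [eq_div_iff hne] at hc
    have hηa : η 0 = η a + η' c * (0 - a) := by linarith
    have hsa : Real.sqrt E * (0 - a) = 2 := by
      rw [hadef]; field_simp; ring
    have h2 : η' c * (0 - a) ≥ 2 := by
      have h3 : 0 - a > 0 := by linarith
      nlinarith [hbound c]
    have := hpos a
    rw [h0] at hηa
    linarith
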